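/- For every g ∈ ℚ[[q]], every a₁ ∈ ℚ with a₁ ≠ 0, and every a₂ ∈ ℚ, there exists a unique formal power series f ∈ ℚ[[q]] whose coefficient of q⁰ is 0, whose coefficient of q¹ is a₁, and whose coefficient of q² is a₂, satisfying the Schwarzian equation S_q f + g = 0. In particular every Schwarzian equation S_q f + g = 0 has a solution in the class f(0) = 0, f'(0) ≠ 0. -/

import Mathlib

/-- The formal derivative `df/dq` on `ℚ[[q]]`. -/
noncomputable def sder (f : PowerSeries ℚ) : PowerSeries ℚ := PowerSeries.derivative ℚ f

/-- The formal Schwarzian derivative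
`S_q f = (f''/f')' − (1/2)(f''/f')²`, for `f` with invertible `f'`. -/
noncomputable def schwarzian (f : PowerSeries ℚ) : PowerSeries ℚ :=
  sder (sder (sder f) * (sder f)⁻¹)
    - PowerSeries.C (1 / 2 : ℚ) * (sder (sder f) * (sder f)⁻¹) ^ 2

open PowerSeries

lemma coeff_sder (f : PowerSeries ℚ) (n : ℕ) :
    coeff n (sder f) = coeff (n + 1) f * (n + 1) := by
  simpa [sder] using PowerSeries.coeff_derivative f n

lemma coeff_mul_range (φ ψ : PowerSeries ℚ) (n : ℕ) :
    coeff n (φ * ψ) = ∑ i ∈ Finset.range (n + 1), coeff i φ * coeff (n - i) ψ := by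
  rw [PowerSeries.coeff_mul, Finset.Nat.sum_antidiagonal_eq_sum_range_succ_mk]

lemma succ_ne_zero_q (n : ℕ) : ((n : ℚ) + 1) ≠ 0 := by positivity

/-- derivative + constant term determine a series -/
lemma sder_inj (f₁ f₂ : PowerSeries ℚ) (h0 : coeff 0 f₁ = coeff 0 f₂)
    (hd : sder f₁ = sder f₂) : f₁ = f₂ := by
  ext n
  cases n with
  | zero => exact h0
  | succ m =>
    have := congrArg (coeff m) hd
    rw [coeff_sder, coeff_sder] at this
    exact mul_right_cancel₀ (succ_ne_zero_q m) this

/-- coefficients of the solution of the Riccati equation u' = (1/2)u² - g, u(0) = c -/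
noncomputable def uc (g : PowerSeries ℚ) (c : ℚ) : ℕ → ℚ
  | 0 => c
  | (n+1) => ((1/2) * ∑ i ∈ (Finset.range (n+1)).attach,
        uc g c i.1 * uc g c (n - i.1) - coeff n g) / (n + 1)
decreasing_by
  · exact Nat.lt_succ_of_le (Nat.le_of_lt_succ (Finset.mem_range.mp i.2))
  · exact Nat.lt_succ_of_le (Nat.sub_le n i.1)

/-- coefficients of the solution of h' = u h, h(0) = a -/
noncomputable def hc (u : PowerSeries ℚ) (a : ℚ) : ℕ → ℚ
  | 0 => a
  | (n+1) => (∑ i ∈ Finset.range (n+1), coeff i u * hc u a (n - i)) / (n + 1)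
decreasing_by
  exact Nat.lt_succ_of_le (Nat.sub_le n i)

lemma coeff_riccati_rhs (g u : PowerSeries ℚ) (n : ℕ) :
    coeff n (PowerSeries.C (1/2 : ℚ) * u ^ 2 - g)
      = (1/2) * ∑ i ∈ Finset.range (n + 1), coeff i u * coeff (n - i) u
        - coeff n g := by
  rw [map_sub, PowerSeries.coeff_C_mul, sq, coeff_mul_range]

/-- existence for the Riccati equation -/
lemma riccati_exists (g : PowerSeries ℚ) (c : ℚ) :
    coeff 0 (PowerSeries.mk (uc g c)) = c ∧
    sder (PowerSeries.mk (uc g c)) =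
      PowerSeries.C (1/2 : ℚ) * (PowerSeries.mk (uc g c)) ^ 2 - g := by
  constructor
  · simp [uc]
  · ext n
    rw [coeff_sder, coeff_riccati_rhs, PowerSeries.coeff_mk]
    show uc g c (n + 1) * ((n : ℚ) + 1) = _
    rw [uc]
    rw [div_mul_cancel₀ _ (succ_ne_zero_q n)]
    congr 2
    simp only [PowerSeries.coeff_mk]
    exact Finset.sum_attach (Finset.range (n+1)) (fun i => uc g c i * uc g c (n - i))

/-- uniqueness for the Riccati equation -/
lemma riccati_unique (g u₁ u₂ : PowerSeries ℚ)
    (h0 : coeff 0 u₁ = coeff 0 u₂)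
    (e₁ : sder u₁ = PowerSeries.C (1/2 : ℚ) * u₁ ^ 2 - g)
    (e₂ : sder u₂ = PowerSeries.C (1/2 : ℚ) * u₂ ^ 2 - g) : u₁ = u₂ := by
  ext n
  induction n using Nat.strong_induction_on with
  | _ n ih =>
    match n with
    | 0 => exact h0
    | (m+1) =>
      have E1 := congrArg (coeff m) e₁
      have E2 := congrArg (coeff m) e₂
      rw [coeff_sder, coeff_riccati_rhs] at E1 E2
      have hsum : ∑ i ∈ Finset.range (m + 1), coeff i u₁ * coeff (m - i) u₁
          = ∑ i ∈ Finset.range (m + 1), coeff i u₂ * coeff (m - i) u₂ := by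
        apply Finset.sum_congr rfl
        intro i hi
        have hi' : i < m + 1 := Finset.mem_range.mp hi
        rw [ih i hi', ih (m - i) (Nat.lt_succ_of_le (Nat.sub_le m i))]
      rw [hsum] at E1
      have := E1.trans E2.symm
      exact mul_right_cancel₀ (succ_ne_zero_q m) this

/-- existence for the linear equation h' = u h -/
lemma linear_exists (u : PowerSeries ℚ) (a : ℚ) :
    coeff 0 (PowerSeries.mk (hc u a)) = a ∧
    sder (PowerSeries.mk (hc u a)) = u * PowerSeries.mk (hc u a) := by
  constructor
  · simp [hc]
  · ext n
    rw [coeff_sder, coeff_mul_range, PowerSeries.coeff_mk]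
    show hc u a (n + 1) * ((n : ℚ) + 1) = _
    rw [hc, div_mul_cancel₀ _ (succ_ne_zero_q n)]
    simp [PowerSeries.coeff_mk]

/-- uniqueness for the linear equation -/
lemma linear_unique (u h₁ h₂ : PowerSeries ℚ)
    (h0 : coeff 0 h₁ = coeff 0 h₂)
    (e₁ : sder h₁ = u * h₁) (e₂ : sder h₂ = u * h₂) : h₁ = h₂ := by
  ext n
  induction n using Nat.strong_induction_on with
  | _ n ih =>
    match n with
    | 0 => exact h0
    | (m+1) =>
      have E1 := congrArg (coeff m) e₁
      have E2 := congrArg (coeff m) e₂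
      rw [coeff_sder, coeff_mul_range] at E1 E2
      have hsum : ∑ i ∈ Finset.range (m + 1), coeff i u * coeff (m - i) h₁
          = ∑ i ∈ Finset.range (m + 1), coeff i u * coeff (m - i) h₂ := by
        apply Finset.sum_congr rfl
        intro i hi
        rw [ih (m - i) (Nat.lt_succ_of_le (Nat.sub_le m i))]
      rw [hsum] at E1
      exact mul_right_cancel₀ (succ_ne_zero_q m) (E1.trans E2.symm)

/-- For every `g ∈ ℚ[[q]]`, `a₁ ∈ ℚ` nonzero and `a₂ ∈ ℚ`, there is a unique
`f ∈ ℚ[[q]]` with coefficients `0, a₁, a₂` in degrees `0, 1, 2` satisfying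
the Schwarzian equation `S_q f + g = 0`.  In particular every Schwarzian
equation has a solution in the class `f(0) = 0`, `f'(0) ≠ 0`. -/
theorem schwarzian_equation_existsUnique (g : PowerSeries ℚ) (a₁ a₂ : ℚ) (ha₁ : a₁ ≠ 0) :
    ∃! f : PowerSeries ℚ,
      PowerSeries.coeff 0 f = 0 ∧
      PowerSeries.coeff 1 f = a₁ ∧
      PowerSeries.coeff 2 f = a₂ ∧
      schwarzian f + g = 0 := by
  classical
  set c : ℚ := 2 * a₂ / a₁ with hc_def
  obtain ⟨hU0, hUeq⟩ := riccati_exists g c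
  obtain ⟨hH0, hHeq⟩ := linear_exists (PowerSeries.mk (uc g c)) a₁
  set U : PowerSeries ℚ := PowerSeries.mk (uc g c) with hU
  set H : PowerSeries ℚ := PowerSeries.mk (hc U a₁) with hH
  -- the candidate solution
  set F : PowerSeries ℚ := PowerSeries.mk
    (fun n => match n with | 0 => 0 | (m+1) => hc U a₁ m / (m + 1)) with hF
  have hsF : sder F = H := by
    ext n
    rw [coeff_sder, hF, PowerSeries.coeff_mk]
    show hc U a₁ n / ((n : ℚ) + 1) * ((n : ℚ) + 1) = _
    rw [div_mul_cancel₀ _ (succ_ne_zero_q n), hH, PowerSeries.coeff_mk]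
  have hHc : PowerSeries.constantCoeff H = a₁ := by
    rw [← PowerSeries.coeff_zero_eq_constantCoeff]; exact hH0
  have hHne : PowerSeries.constantCoeff H ≠ 0 := by rw [hHc]; exact ha₁
  have hHinv : H * H⁻¹ = 1 := PowerSeries.mul_inv_cancel H hHne
  have hratio : sder H * H⁻¹ = U := by
    rw [hHeq, mul_assoc, hHinv, mul_one]
  have hschw : schwarzian F + g = 0 := by
    rw [schwarzian, hsF, hratio, hUeq]; ring
  -- a general lemma: any solution equals F
  have main : ∀ f : PowerSeries ℚ,
      PowerSeries.coeff 0 f = 0 → PowerSeries.coeff 1 f = a₁ →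
      PowerSeries.coeff 2 f = a₂ → schwarzian f + g = 0 → f = F := by
    intro f h0 h1 h2 heq
    set h : PowerSeries ℚ := sder f with hh
    set u : PowerSeries ℚ := sder h * h⁻¹ with hu
    have hhc : PowerSeries.constantCoeff h = a₁ := by
      rw [← PowerSeries.coeff_zero_eq_constantCoeff, hh, coeff_sder]
      simpa using h1
    have hhne : PowerSeries.constantCoeff h ≠ 0 := by rw [hhc]; exact ha₁
    have hhinv : h * h⁻¹ = 1 := PowerSeries.mul_inv_cancel h hhne
    have hueq : sder u = PowerSeries.C (1/2 : ℚ) * u ^ 2 - g := by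
      have : sder u - PowerSeries.C (1/2 : ℚ) * u ^ 2 + g = 0 := by
        rw [hu, hh]; exact heq
      linear_combination this
    have hu0 : coeff 0 u = c := by
      rw [hu, PowerSeries.coeff_zero_eq_constantCoeff, map_mul]
      rw [PowerSeries.constantCoeff_inv]
      have h1h : PowerSeries.constantCoeff (sder h) = 2 * a₂ := by
        rw [← PowerSeries.coeff_zero_eq_constantCoeff, coeff_sder, hh, coeff_sder]
        rw [h2]; push_cast; ring
      rw [h1h, hhc, hc_def]; ring
    have hUu : u = U := by
      apply riccati_unique g u U _ hueq hUeq
      rw [hu0, hU0]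
    have hheq : sder h = u * h := by
      rw [hu, mul_assoc, mul_comm h⁻¹ h, hhinv, mul_one]
    have hhH : h = H := by
      apply linear_unique U h H _ _ hHeq
      · rw [hH0, PowerSeries.coeff_zero_eq_constantCoeff, hhc]
      · rw [← hUu]; exact hheq
    apply sder_inj
    · rw [h0, hF, PowerSeries.coeff_mk]
    · rw [hsF, ← hhH, hh]
  refine ⟨F, ⟨?_, ?_, ?_, hschw⟩, fun f hf => main f hf.1 hf.2.1 hf.2.2.1 hf.2.2.2⟩
  · rw [hF, PowerSeries.coeff_mk]
  · rw [hF, PowerSeries.coeff_mk]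
    show hc U a₁ 0 / (((0:ℕ):ℚ) + 1) = a₁
    rw [hc]; norm_num
  · rw [hF, PowerSeries.coeff_mk]
    show hc U a₁ 1 / (((1:ℕ):ℚ) + 1) = a₂
    have h00 : hc U a₁ 0 = a₁ := by simp [hc]
    rw [hc, Finset.sum_range_one, Nat.sub_self, h00, hU0, hc_def]
    push_cast
    field_simp
    ring
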